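/- (1/(8·Real.pi)) · ∫ u in (-1:ℝ)..1, ∫ v in (-1:ℝ)..1, ∫ θ in (0:ℝ)..(2·Real.pi), Real.log (Real.sqrt (1 − u^2) · Real.sqrt (1 − v^2) · |Real.cos θ|) = Real.log 2 − 2. Equivalently, for u, v independent uniform on [−1,1] and θ independent uniform on [0, 2π), the expectation of log(√(1−u²)·√(1−v²)·|cos θ|) equals log 2 − 2. (This is the Appendix B Haar average E_{U,V∼Haar}[log|U₃₃V₂₂ + U₃₂V₁₂|] = log 2 − 2: the bilinear combination equals the scalar product of two random planar projections of independent uniform unit vectors, whose norms are √(1−u²), √(1−v²) and whose relative angle θ is uniform; this value enters the upper bound Δ ≤ 3γ + 3 for staggered-like doping.) -/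

import Mathlib

open Real MeasureTheory intervalIntegral Set

namespace HaarAux

lemma log_int_one : IntervalIntegrable Real.log volume 0 1 := by
  have hcont : ContinuousOn (fun x : ℝ => x - x * Real.log x) (uIcc (0:ℝ) 1) :=
    (continuous_id.sub Real.continuous_mul_log).continuousOn
  have h := intervalIntegrable_deriv_of_nonneg (g := fun x : ℝ => x - x * Real.log x)
    (g' := fun x : ℝ => -Real.log x) hcont ?_ ?_
  · have h2 := h.neg
    apply h2.congr_ae
    filter_upwards with x
    simp
  · intro x hx
    rw [min_eq_left (by norm_num), max_eq_right (by norm_num)] at hx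
    have h1 := (hasDerivAt_id x).sub (Real.hasDerivAt_mul_log (ne_of_gt hx.1))
    exact h1.congr_deriv (by ring)
  · intro x hx
    rw [min_eq_left (by norm_num), max_eq_right (by norm_num)] at hx
    have : Real.log x ≤ 0 := Real.log_nonpos hx.1.le hx.2.le
    show (0:ℝ) ≤ -Real.log x
    linarith

lemma log_int {b : ℝ} (hb : 0 < b) : IntervalIntegrable Real.log volume 0 b := by
  rcases le_total b 1 with h | h
  · apply log_int_one.mono_set
    rw [uIcc_of_le hb.le, uIcc_of_le (by norm_num : (0:ℝ) ≤ 1)]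
    exact Icc_subset_Icc le_rfl h
  · apply log_int_one.trans
    apply intervalIntegrable_log
    rw [uIcc_of_le h]
    intro hc
    have := hc.1
    norm_num at this

lemma logsin_int : IntervalIntegrable (fun x => Real.log (Real.sin x)) volume 0 (π/2) := by
  have hπ := Real.pi_pos
  apply IntervalIntegrable.mono_fun' (g := fun x => Real.log 2 - Real.log x)
    (intervalIntegrable_const.sub (log_int (by positivity)))
  · exact (Real.measurable_log.comp Real.measurable_sin).aestronglyMeasurable
  · rw [uIoc_of_le (by positivity)]
    filter_upwards [ae_restrict_mem measurableSet_Ioc] with x hx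
    have hx1 : 0 < x := hx.1
    have hx2 : x ≤ π / 2 := hx.2
    have hsinpos : 0 < Real.sin x := Real.sin_pos_of_pos_of_lt_pi hx1 (by linarith)
    have hhalf : x / 2 ≤ Real.sin x := by
      have h1 := Real.mul_le_sin hx1.le hx2
      have h4 : π ≤ 4 := Real.pi_le_four
      have h5 : x / 2 ≤ 2 / π * x := by
        rw [div_mul_eq_mul_div, le_div_iff₀ hπ]
        nlinarith
      linarith
    have hlog : Real.log x - Real.log 2 ≤ Real.log (Real.sin x) := by
      have := Real.log_le_log (by positivity) hhalf
      rwa [Real.log_div hx1.ne' (by norm_num)] at this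
    have hle0 : Real.log (Real.sin x) ≤ 0 := Real.log_nonpos hsinpos.le (Real.sin_le_one x)
    rw [Real.norm_eq_abs, abs_of_nonpos hle0]
    linarith

lemma logcos_int : IntervalIntegrable (fun x => Real.log (Real.cos x)) volume 0 (π/2) := by
  have h := (logsin_int.comp_sub_left (π/2)).symm
  simpa [Real.sin_pi_div_two_sub] using h

lemma logsin_int_pi2 : IntervalIntegrable (fun x => Real.log (Real.sin x)) volume (π/2) π := by
  have h := logsin_int.comp_sub_left π
  simp only [Real.sin_pi_sub] at h
  have e1 : π - 0 = π := by ring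
  have e2 : π - π/2 = π/2 := by ring
  rw [e1, e2] at h
  exact h.symm


lemma ae_ne (c : ℝ) : ∀ᵐ x : ℝ, x ≠ c := by
  have h : {x : ℝ | ¬ x ≠ c} = {c} := by ext x; simp
  rw [ae_iff, h]
  exact Real.volume_singleton

lemma logsin_int_pi : IntervalIntegrable (fun x => Real.log (Real.sin x)) volume 0 π :=
  logsin_int.trans logsin_int_pi2

lemma Ic_eq_Is : (∫ x in (0:ℝ)..(π/2), Real.log (Real.cos x))
    = ∫ x in (0:ℝ)..(π/2), Real.log (Real.sin x) := by
  have h := integral_comp_sub_left (a := 0) (b := π/2) (fun x => Real.log (Real.sin x)) (π/2)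
  simp only [Real.sin_pi_div_two_sub, sub_zero, sub_self] at h
  rw [← h]

lemma Is2_eq : (∫ x in (π/2:ℝ)..π, Real.log (Real.sin x))
    = ∫ x in (0:ℝ)..(π/2), Real.log (Real.sin x) := by
  have h := integral_comp_sub_left (a := 0) (b := π/2) (fun x => Real.log (Real.sin x)) π
  simp only [Real.sin_pi_sub, sub_zero] at h
  have e : π - π/2 = π/2 := by ring
  rw [e] at h
  exact h.symm

lemma Ipi_eq : (∫ x in (0:ℝ)..π, Real.log (Real.sin x))
    = 2 * ∫ x in (0:ℝ)..(π/2), Real.log (Real.sin x) := by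
  rw [← integral_add_adjacent_intervals logsin_int logsin_int_pi2, Is2_eq]
  ring

lemma Is_val : (∫ x in (0:ℝ)..(π/2), Real.log (Real.sin x)) = -(π/2 * Real.log 2) := by
  have hπ := Real.pi_pos
  set Is := ∫ x in (0:ℝ)..(π/2), Real.log (Real.sin x) with hIs
  -- A = ∫₀^{π/2} log (sin (2x)) = (1/2) ∫₀^π log sin = Is
  have hA1 : (∫ x in (0:ℝ)..(π/2), Real.log (Real.sin (2*x))) = Is := by
    have h := integral_comp_mul_left (a := 0) (b := π/2) (f := fun x => Real.log (Real.sin x))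
      (c := 2) (by norm_num)
    rw [h]
    norm_num
    rw [mul_div_cancel₀ _ (by norm_num : (2:ℝ) ≠ 0)]
    rw [Ipi_eq, ← hIs]
    ring
  -- A = ∫ (log 2 + log sin x + log cos x)
  have hA2 : (∫ x in (0:ℝ)..(π/2), Real.log (Real.sin (2*x)))
      = ∫ x in (0:ℝ)..(π/2), (Real.log 2 + Real.log (Real.sin x) + Real.log (Real.cos x)) := by
    apply intervalIntegral.integral_congr_ae
    filter_upwards [ae_ne (π/2)] with x hne hx
    rw [uIoc_of_le (by positivity)] at hx
    have hx1 : 0 < x := hx.1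
    have hx2 : x < π/2 := lt_of_le_of_ne hx.2 hne
    have hs : 0 < Real.sin x := Real.sin_pos_of_pos_of_lt_pi hx1 (by linarith)
    have hc : 0 < Real.cos x := Real.cos_pos_of_mem_Ioo ⟨by linarith, hx2⟩
    rw [Real.sin_two_mul, Real.log_mul (by positivity) hc.ne',
      Real.log_mul (by norm_num) hs.ne']
  have hA3 : (∫ x in (0:ℝ)..(π/2), (Real.log 2 + Real.log (Real.sin x) + Real.log (Real.cos x)))
      = π/2 * Real.log 2 + Is + Is := by
    rw [integral_add ((intervalIntegrable_const.add logsin_int)) logcos_int,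
      integral_add intervalIntegrable_const logsin_int,
      intervalIntegral.integral_const, Ic_eq_Is, ← hIs]
    simp [smul_eq_mul]
  have := hA1.symm.trans (hA2.trans hA3)
  linarith


lemma hπ2 : (0:ℝ) ≤ π/2 := by positivity

lemma logabscos_int_1 : IntervalIntegrable (fun x => Real.log |Real.cos x|) volume 0 (π/2) := by
  apply logcos_int.congr_ae
  rw [uIoc_of_le hπ2]
  filter_upwards [ae_restrict_mem measurableSet_Ioc] with x hx
  have : 0 ≤ Real.cos x := Real.cos_nonneg_of_mem_Icc ⟨by linarith [hx.1.le, Real.pi_pos], hx.2⟩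
  rw [abs_of_nonneg this]

lemma logabssin_int_1 : IntervalIntegrable (fun x => Real.log |Real.sin x|) volume 0 (π/2) := by
  apply logsin_int.congr_ae
  rw [uIoc_of_le hπ2]
  filter_upwards [ae_restrict_mem measurableSet_Ioc] with x hx
  have : 0 ≤ Real.sin x := Real.sin_nonneg_of_nonneg_of_le_pi hx.1.le
    (by linarith [hx.2, Real.pi_pos])
  rw [abs_of_nonneg this]

lemma V1 : (∫ x in (0:ℝ)..(π/2), Real.log |Real.cos x|)
    = ∫ x in (0:ℝ)..(π/2), Real.log (Real.sin x) := by
  rw [← Ic_eq_Is]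
  apply intervalIntegral.integral_congr
  intro x hx
  rw [uIcc_of_le hπ2] at hx
  have : 0 ≤ Real.cos x := Real.cos_nonneg_of_mem_Icc ⟨by linarith [hx.1, Real.pi_pos], hx.2⟩
  simp [abs_of_nonneg this]

lemma Vs1 : (∫ x in (0:ℝ)..(π/2), Real.log |Real.sin x|)
    = ∫ x in (0:ℝ)..(π/2), Real.log (Real.sin x) := by
  apply intervalIntegral.integral_congr
  intro x hx
  rw [uIcc_of_le hπ2] at hx
  have : 0 ≤ Real.sin x := Real.sin_nonneg_of_nonneg_of_le_pi hx.1
    (by linarith [hx.2, Real.pi_pos])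
  simp [abs_of_nonneg this]

lemma logabscos_int_2 : IntervalIntegrable (fun x => Real.log |Real.cos x|) volume (π/2) π := by
  have h := logabssin_int_1.comp_sub_right (π/2)
  simp only [Real.sin_sub_pi_div_two, abs_neg, zero_add] at h
  have e : π/2 + π/2 = π := by ring
  rwa [e] at h

lemma V2 : (∫ x in (π/2:ℝ)..π, Real.log |Real.cos x|)
    = ∫ x in (0:ℝ)..(π/2), Real.log (Real.sin x) := by
  have h := integral_comp_add_right (a := 0) (b := π/2)
    (fun x => Real.log |Real.cos x|) (π/2)
  simp only [Real.cos_add_pi_div_two, abs_neg, zero_add] at h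
  have e : π/2 + π/2 = π := by ring
  rw [e] at h
  rw [← h, Vs1]

lemma logabscos_int_pi : IntervalIntegrable (fun x => Real.log |Real.cos x|) volume 0 π :=
  logabscos_int_1.trans logabscos_int_2

lemma Vpi : (∫ x in (0:ℝ)..π, Real.log |Real.cos x|)
    = 2 * ∫ x in (0:ℝ)..(π/2), Real.log (Real.sin x) := by
  rw [← integral_add_adjacent_intervals logabscos_int_1 logabscos_int_2, V1, V2]
  ring

lemma logabscos_int_2pi : IntervalIntegrable (fun x => Real.log |Real.cos x|) volume 0 (2*π) := by
  apply logabscos_int_pi.trans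
  have h := logabscos_int_pi.comp_sub_right π
  have h2 : (fun x => Real.log |Real.cos (x - π)|) = fun x => Real.log |Real.cos x| := by
    funext x
    rw [Real.cos_sub_pi, abs_neg]
  rw [h2, zero_add] at h
  have e : π + π = 2*π := by ring
  rwa [e] at h

lemma K_val : (∫ x in (0:ℝ)..(2*π), Real.log |Real.cos x|) = -(2*π*Real.log 2) := by
  have h := integral_comp_add_right (a := 0) (b := π) (fun x => Real.log |Real.cos x|) π
  have h2 : (fun x => Real.log |Real.cos (x + π)|) = fun x => Real.log |Real.cos x| := by
    funext x
    rw [Real.cos_add_pi, abs_neg]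
  rw [h2, zero_add] at h
  have e : π + π = 2*π := by ring
  rw [e] at h
  have hsecond : IntervalIntegrable (fun x => Real.log |Real.cos x|) volume π (2*π) := by
    have h3 := logabscos_int_pi.comp_sub_right π
    rw [(by funext x; rw [Real.cos_sub_pi, abs_neg] :
      (fun x => Real.log |Real.cos (x - π)|) = fun x => Real.log |Real.cos x|),
      zero_add, (by ring : π + π = 2*π)] at h3
    exact h3
  rw [← integral_add_adjacent_intervals logabscos_int_pi hsecond, ← h, Vpi, Is_val]
  ring


noncomputable def F (x : ℝ) : ℝ := (1+x) * Real.log (1+x) - (1-x) * Real.log (1-x) - 2*x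

lemma F_cont : Continuous F := by
  unfold F
  exact ((Real.continuous_mul_log.comp (continuous_const.add continuous_id)).sub
    (Real.continuous_mul_log.comp (continuous_const.sub continuous_id))).sub
    (continuous_const.mul continuous_id)

lemma F_deriv {x : ℝ} (hx : x ∈ Ioo (-1:ℝ) 1) :
    HasDerivAt F (Real.log (1 - x^2)) x := by
  have h1 : (0:ℝ) < 1 + x := by linarith [hx.1]
  have h2 : (0:ℝ) < 1 - x := by linarith [hx.2]
  have d1 : HasDerivAt (fun x : ℝ => (1+x) * Real.log (1+x)) (Real.log (1+x) + 1) x := by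
    have hu : HasDerivAt (fun x : ℝ => 1 + x) 1 x := (hasDerivAt_id x).const_add 1
    have := (Real.hasDerivAt_mul_log h1.ne').comp x hu
    simpa [Function.comp_def] using this
  have d2 : HasDerivAt (fun x : ℝ => (1-x) * Real.log (1-x)) (-(Real.log (1-x) + 1)) x := by
    have hu : HasDerivAt (fun x : ℝ => 1 - x) (-1) x := (hasDerivAt_id x).const_sub 1
    have := (Real.hasDerivAt_mul_log h2.ne').comp x hu
    simpa [Function.comp_def] using this
  have d3 : HasDerivAt (fun x : ℝ => 2*x) 2 x := by
    simpa using (hasDerivAt_id x).const_mul 2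
  have := (d1.sub d2).sub d3
  have e : Real.log (1+x) + 1 - -(Real.log (1-x) + 1) - 2 = Real.log (1 - x^2) := by
    have : (1:ℝ) - x^2 = (1+x)*(1-x) := by ring
    rw [this, Real.log_mul h1.ne' h2.ne']
    ring
  rw [← e]
  exact this

lemma log_one_sub_sq_int : IntervalIntegrable (fun x => Real.log (1 - x^2)) volume (-1) 1 := by
  have h := intervalIntegrable_deriv_of_nonneg (g := fun x => -F x)
    (g' := fun x => -Real.log (1 - x^2)) (a := -1) (b := 1) (F_cont.neg).continuousOn ?_ ?_
  · have h2 := h.neg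
    apply h2.congr_ae
    filter_upwards with x
    simp
  · intro x hx
    rw [min_eq_left (by norm_num), max_eq_right (by norm_num)] at hx
    exact (F_deriv hx).neg
  · intro x hx
    rw [min_eq_left (by norm_num), max_eq_right (by norm_num)] at hx
    show (0:ℝ) ≤ -Real.log (1 - x^2)
    have h1 : (0:ℝ) < 1 - x^2 := by nlinarith [hx.1, hx.2]
    have : Real.log (1 - x^2) ≤ 0 := Real.log_nonpos h1.le (by nlinarith [sq_nonneg x])
    linarith

lemma log_one_sub_sq_val :
    (∫ x in (-1:ℝ)..1, Real.log (1 - x^2)) = 4 * Real.log 2 - 4 := by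
  rw [integral_eq_sub_of_hasDerivAt_of_le (by norm_num) F_cont.continuousOn
    (fun x hx => F_deriv hx) log_one_sub_sq_int]
  unfold F
  norm_num
  ring

lemma log_sqrt_int :
    IntervalIntegrable (fun x => Real.log (Real.sqrt (1 - x^2))) volume (-1) 1 := by
  apply (log_one_sub_sq_int.const_mul (1/2 : ℝ)).congr_ae
  rw [uIoc_of_le (by norm_num : (-1:ℝ) ≤ 1)]
  filter_upwards [ae_restrict_mem measurableSet_Ioc] with x hx
  have h1 : (0:ℝ) ≤ 1 - x^2 := by nlinarith [hx.1.le, hx.2]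
  rw [Real.log_sqrt h1]
  ring

lemma log_sqrt_val :
    (∫ x in (-1:ℝ)..1, Real.log (Real.sqrt (1 - x^2))) = 2 * Real.log 2 - 2 := by
  have h : ∀ x ∈ uIcc (-1:ℝ) 1, Real.log (Real.sqrt (1 - x^2))
      = (1/2 : ℝ) * Real.log (1 - x^2) := by
    intro x hx
    rw [uIcc_of_le (by norm_num : (-1:ℝ) ≤ 1)] at hx
    have h1 : (0:ℝ) ≤ 1 - x^2 := by nlinarith [hx.1, hx.2]
    rw [Real.log_sqrt h1]
    ring
  rw [intervalIntegral.integral_congr h, intervalIntegral.integral_const_mul,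
    log_one_sub_sq_val]
  ring


lemma cos_ne_ae : ∀ᵐ θ : ℝ, Real.cos θ ≠ 0 := by
  have hc : {θ : ℝ | Real.cos θ = 0}.Countable := by
    have hsub : {θ : ℝ | Real.cos θ = 0} ⊆ Set.range (fun n : ℤ => ((2*n+1):ℝ) * π / 2) := by
      intro θ hθ
      rcases Real.cos_eq_zero_iff.mp hθ with ⟨n, hn⟩
      exact ⟨n, by push_cast; linarith [hn]⟩
    exact (Set.countable_range _).mono hsub
  rw [ae_iff]
  have : {θ : ℝ | ¬ Real.cos θ ≠ 0} = {θ : ℝ | Real.cos θ = 0} := by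
    ext θ; simp
  rw [this]
  exact hc.measure_zero _

lemma M1 {u v : ℝ} (hu : Real.sqrt (1 - u^2) ≠ 0) (hv : Real.sqrt (1 - v^2) ≠ 0) :
    (∫ θ in (0:ℝ)..(2*π),
        Real.log (Real.sqrt (1 - u^2) * Real.sqrt (1 - v^2) * |Real.cos θ|))
      = (2*π*Real.log (Real.sqrt (1 - u^2)) - 2*π*Real.log 2)
        + 2*π*Real.log (Real.sqrt (1 - v^2)) := by
  have hπ := Real.pi_pos
  have hcongr : (∫ θ in (0:ℝ)..(2*π),
      Real.log (Real.sqrt (1 - u^2) * Real.sqrt (1 - v^2) * |Real.cos θ|))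
      = ∫ θ in (0:ℝ)..(2*π),
        ((Real.log (Real.sqrt (1 - u^2)) + Real.log (Real.sqrt (1 - v^2)))
          + Real.log |Real.cos θ|) := by
    apply intervalIntegral.integral_congr_ae
    filter_upwards [cos_ne_ae] with θ hθ _
    rw [Real.log_mul (mul_ne_zero hu hv) (abs_ne_zero.mpr hθ), Real.log_mul hu hv]
  rw [hcongr, integral_add intervalIntegrable_const logabscos_int_2pi,
    intervalIntegral.integral_const, K_val]
  simp only [smul_eq_mul, sub_zero]
  ring

lemma M2 {u : ℝ} (hu : u ∈ Ioo (-1:ℝ) 1) :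
    (∫ v in (-1:ℝ)..1, ∫ θ in (0:ℝ)..(2*π),
        Real.log (Real.sqrt (1 - u^2) * Real.sqrt (1 - v^2) * |Real.cos θ|))
      = 4*π*Real.log (Real.sqrt (1 - u^2)) - 4*π := by
  have hπ := Real.pi_pos
  have hu' : Real.sqrt (1 - u^2) ≠ 0 := by
    have : (0:ℝ) < 1 - u^2 := by nlinarith [hu.1, hu.2]
    positivity
  have hcongr : (∫ v in (-1:ℝ)..1, ∫ θ in (0:ℝ)..(2*π),
      Real.log (Real.sqrt (1 - u^2) * Real.sqrt (1 - v^2) * |Real.cos θ|))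
      = ∫ v in (-1:ℝ)..1,
        ((2*π*Real.log (Real.sqrt (1 - u^2)) - 2*π*Real.log 2)
          + 2*π*Real.log (Real.sqrt (1 - v^2))) := by
    apply intervalIntegral.integral_congr_ae
    filter_upwards [ae_ne (1:ℝ)] with v hne hvmem
    rw [uIoc_of_le (by norm_num : (-1:ℝ) ≤ 1)] at hvmem
    have hv2 : v < 1 := lt_of_le_of_ne hvmem.2 hne
    have hv' : Real.sqrt (1 - v^2) ≠ 0 := by
      have : (0:ℝ) < 1 - v^2 := by nlinarith [hvmem.1]
      positivity
    exact M1 hu' hv'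
  rw [hcongr, integral_add intervalIntegrable_const
      (by simpa [mul_assoc] using log_sqrt_int.const_mul (2*π)),
    intervalIntegral.integral_const, intervalIntegral.integral_const_mul, log_sqrt_val]
  simp only [smul_eq_mul]
  ring

theorem main :
    (1 / (8 * Real.pi)) *
      ∫ u in (-1 : ℝ)..1, ∫ v in (-1 : ℝ)..1, ∫ θ in (0 : ℝ)..(2 * Real.pi),
        Real.log (Real.sqrt (1 - u ^ 2) * Real.sqrt (1 - v ^ 2) * |Real.cos θ|) =
      Real.log 2 - 2 := by
  have hπ := Real.pi_pos
  have hcongr : (∫ u in (-1 : ℝ)..1, ∫ v in (-1 : ℝ)..1, ∫ θ in (0 : ℝ)..(2 * Real.pi),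
      Real.log (Real.sqrt (1 - u ^ 2) * Real.sqrt (1 - v ^ 2) * |Real.cos θ|))
      = ∫ u in (-1:ℝ)..1, ((-(4*π)) + 4*π*Real.log (Real.sqrt (1 - u^2))) := by
    apply intervalIntegral.integral_congr_ae
    filter_upwards [ae_ne (1:ℝ)] with u hne humem
    rw [uIoc_of_le (by norm_num : (-1:ℝ) ≤ 1)] at humem
    have hu2 : u < 1 := lt_of_le_of_ne humem.2 hne
    rw [M2 ⟨humem.1, hu2⟩]
    ring
  rw [hcongr, integral_add intervalIntegrable_const
      (by simpa [mul_assoc] using log_sqrt_int.const_mul (4*π)),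
    intervalIntegral.integral_const, intervalIntegral.integral_const_mul, log_sqrt_val]
  simp only [smul_eq_mul]
  field_simp
  ring

end HaarAux

/-- **Appendix B Haar average** `E[log|U₃₃V₂₂ + U₃₂V₁₂|] = log 2 − 2`:
for `u, v` independent uniform on `[-1,1]` and `θ` independent uniform on
`[0, 2π)`, the expectation of `log(√(1-u²)·√(1-v²)·|cos θ|)` equals `log 2 - 2`. -/
theorem haar_average_log_bilinear :
    (1 / (8 * Real.pi)) *
      ∫ u in (-1 : ℝ)..1, ∫ v in (-1 : ℝ)..1, ∫ θ in (0 : ℝ)..(2 * Real.pi),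
        Real.log (Real.sqrt (1 - u ^ 2) * Real.sqrt (1 - v ^ 2) * |Real.cos θ|) =
      Real.log 2 - 2 := HaarAux.main
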